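/- arXiv:2506.15490 — 3 statements merged into one kernel-verified Lean document; each statement's English description precedes it below -/
import Mathlib

section
/- Let d and j be integers with 1 ≤ j ≤ d. For each i with 0 ≤ i ≤ d − j, let v_i ∈ (ZMod 2)^d be the indicator vector of the window {i, i+1, …, i+j−1} (that is, (v_i)_t = 1 if i ≤ t ≤ i+j−1 and (v_i)_t = 0 otherwise), and let 𝟙 ∈ (ZMod 2)^d be the all-ones vector. Then 𝟙 lies in the F₂-linear span of {v_0, v_1, …, v_{d−j}} if and only if j divides d. -/
/-- The indicator vector in `(ZMod 2)^d` of the window `{i, i+1, …, i+j-1}`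
of `j` consecutive positions starting at `i`. -/
def window (d j i : ℕ) : Fin d → ZMod 2 :=
  fun t => if i ≤ (t : ℕ) ∧ (t : ℕ) ≤ i + j - 1 then 1 else 0

/-- Summation over a fixed finite set of coordinates, as a linear functional. -/
private def sumOn (d : ℕ) (S : Finset (Fin d)) : (Fin d → ZMod 2) →ₗ[ZMod 2] ZMod 2 where
  toFun x := ∑ t ∈ S, x t
  map_add' x y := by simp [Finset.sum_add_distrib]
  map_smul' c x := by simp [Finset.mul_sum]

private lemma window_mem_unique {j i y z r : ℕ} (hj : 1 ≤ j)
    (hy : y % j = r ∧ i ≤ y ∧ y ≤ i + j - 1)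
    (hz : z % j = r ∧ i ≤ z ∧ z ≤ i + j - 1) : y = z := by
  obtain ⟨hy1, hy2, hy3⟩ := hy
  obtain ⟨hz1, hz2, hz3⟩ := hz
  rcases le_total y z with h | h
  · have hdvd : j ∣ z - y := (Nat.modEq_iff_dvd' h).mp (by unfold Nat.ModEq; omega)
    have h0 : z - y = 0 := Nat.eq_zero_of_dvd_of_lt hdvd (by omega)
    omega
  · have hdvd : j ∣ y - z := (Nat.modEq_iff_dvd' h).mp (by unfold Nat.ModEq; omega)
    have h0 : y - z = 0 := Nat.eq_zero_of_dvd_of_lt hdvd (by omega)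
    omega

private lemma window_res_exists (j i r : ℕ) (hj : 1 ≤ j) (hr : r < j) :
    ∃ t : ℕ, t % j = r ∧ i ≤ t ∧ t ≤ i + j - 1 := by
  have hd : j * (i / j) + i % j = i := Nat.div_add_mod i j
  have ha : i % j < j := Nat.mod_lt _ hj
  by_cases hcase : i % j ≤ r
  · refine ⟨j * (i / j) + r, ?_, ?_, ?_⟩
    · rw [Nat.mul_add_mod]; exact Nat.mod_eq_of_lt hr
    · omega
    · omega
  · refine ⟨j * (i / j) + j + r, ?_, ?_, ?_⟩
    · have h1 : j * (i / j) + j + r = j * (i / j + 1) + r := by ring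
      rw [h1, Nat.mul_add_mod]; exact Nat.mod_eq_of_lt hr
    · omega
    · omega

private lemma card_residue (d j r : ℕ) (hj : 1 ≤ j) (hr : r < j) :
    (Finset.univ.filter fun t : Fin d => (t : ℕ) % j = r).card
      = d / j + (if r < d % j then 1 else 0) := by
  have hd : j * (d / j) + d % j = d := Nat.div_add_mod d j
  have hs : d % j < j := Nat.mod_lt _ hj
  rw [← Finset.card_range (d / j + (if r < d % j then 1 else 0))]
  refine Finset.card_bij (fun t _ => (t : ℕ) / j) ?_ ?_ ?_
  · intro t ht
    simp only [Finset.mem_filter, Finset.mem_univ, true_and] at ht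
    simp only [Finset.mem_range]
    have h1 : j * ((t : ℕ) / j) + r = (t : ℕ) := by rw [← ht]; exact Nat.div_add_mod _ j
    have h2 : (t : ℕ) < d := t.isLt
    by_contra hcon
    push_neg at hcon
    have h3 : j * (d / j + (if r < d % j then 1 else 0)) ≤ j * ((t : ℕ) / j) :=
      Nat.mul_le_mul_left _ hcon
    by_cases hc : r < d % j
    · simp only [hc, if_true] at h3
      rw [Nat.mul_add, Nat.mul_one] at h3
      omega
    · simp only [hc, if_false] at h3
      rw [Nat.mul_add, Nat.mul_zero] at h3
      omega
  · intro a ha b hb hab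
    simp only [Finset.mem_filter, Finset.mem_univ, true_and] at ha hb
    have h1 : j * ((a : ℕ) / j) + r = (a : ℕ) := by rw [← ha]; exact Nat.div_add_mod _ j
    have h2 : j * ((b : ℕ) / j) + r = (b : ℕ) := by rw [← hb]; exact Nat.div_add_mod _ j
    have hab' : (a : ℕ) / j = (b : ℕ) / j := hab
    rw [hab'] at h1
    exact Fin.ext (by omega)
  · intro k hk
    simp only [Finset.mem_range] at hk
    have hkd : j * k + r < d := by
      by_cases hc : r < d % j
      · simp only [hc, if_true] at hk
        have h4 : k ≤ d / j := by omega
        have h5 : j * k ≤ j * (d / j) := Nat.mul_le_mul_left _ h4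
        omega
      · simp only [hc, if_false] at hk
        have h4 : k + 1 ≤ d / j := hk
        have h5 : j * (k + 1) ≤ j * (d / j) := Nat.mul_le_mul_left _ h4
        rw [Nat.mul_add, Nat.mul_one] at h5
        omega
    refine ⟨⟨j * k + r, hkd⟩, ?_, ?_⟩
    · simp [Finset.mem_filter, Nat.mul_add_mod, Nat.mod_eq_of_lt hr]
    · show (j * k + r) / j = k
      rw [Nat.mul_add_div hj, Nat.div_eq_of_lt hr]
      omega

private lemma sum_res_window (d j i r : ℕ) (hj : 1 ≤ j) (hr : r < j) (hi : i + j ≤ d) :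
    ∑ t ∈ Finset.univ.filter (fun t : Fin d => (t : ℕ) % j = r), window d j i t = 1 := by
  obtain ⟨t₀, ht₀⟩ := window_res_exists j i r hj hr
  have ht₀d : t₀ < d := by omega
  unfold window
  rw [Finset.sum_boole]
  have hsingle : ((Finset.univ.filter fun t : Fin d => (t : ℕ) % j = r).filter
      (fun t : Fin d => i ≤ (t : ℕ) ∧ (t : ℕ) ≤ i + j - 1)) = {(⟨t₀, ht₀d⟩ : Fin d)} := by
    apply Finset.eq_singleton_iff_unique_mem.mpr
    constructor
    · simp only [Finset.mem_filter, Finset.mem_univ, true_and]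
      exact ⟨ht₀.1, ht₀.2.1, ht₀.2.2⟩
    · intro x hx
      simp only [Finset.mem_filter, Finset.mem_univ, true_and] at hx
      apply Fin.ext
      exact window_mem_unique hj ⟨hx.1, hx.2.1, hx.2.2⟩ ht₀
  rw [hsingle]
  simp

/-- The all-ones vector `𝟙` lies in the `F₂`-span of the window vectors
`v_0, …, v_{d-j}` if and only if `j` divides `d`. -/
theorem allOnes_mem_span_windows_iff_dvd (d j : ℕ) (hj : 1 ≤ j) (hjd : j ≤ d) :
    ((fun _ => 1 : Fin d → ZMod 2) ∈
      Submodule.span (ZMod 2) {x : Fin d → ZMod 2 | ∃ i ≤ d - j, x = window d j i}) ↔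
    j ∣ d := by
  constructor
  · intro h
    by_contra hnd
    have hs1 : 1 ≤ d % j := by
      rcases Nat.eq_zero_or_pos (d % j) with h0 | h0
      · exact absurd (Nat.dvd_of_mod_eq_zero h0) hnd
      · exact h0
    have hsj : d % j < j := Nat.mod_lt _ hj
    set F0 := Finset.univ.filter (fun t : Fin d => (t : ℕ) % j = 0) with hF0
    set Fs := Finset.univ.filter (fun t : Fin d => (t : ℕ) % j = d % j) with hFs
    set L := sumOn d F0 + sumOn d Fs with hL
    have hker : {x : Fin d → ZMod 2 | ∃ i ≤ d - j, x = window d j i} ⊆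
        (LinearMap.ker L : Set (Fin d → ZMod 2)) := by
      rintro x ⟨i, hi, rfl⟩
      have hij : i + j ≤ d := by omega
      have h0 : ∑ t ∈ F0, window d j i t = 1 := sum_res_window d j i 0 hj hj hij
      have hs : ∑ t ∈ Fs, window d j i t = 1 := sum_res_window d j i (d % j) hj hsj hij
      simp only [SetLike.mem_coe, LinearMap.mem_ker, hL, LinearMap.add_apply]
      show (∑ t ∈ F0, window d j i t) + (∑ t ∈ Fs, window d j i t) = 0
      rw [h0, hs]
      decide
    have hspan : Submodule.span (ZMod 2)
        {x : Fin d → ZMod 2 | ∃ i ≤ d - j, x = window d j i} ≤ LinearMap.ker L :=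
      Submodule.span_le.mpr hker
    have hL1 : L (fun _ => 1) = 0 := hspan h
    have hc0 : F0.card = d / j + 1 := by
      have hpos : 0 < d % j := hs1
      rw [hF0, card_residue d j 0 hj hj, if_pos hpos]
    have hcs : Fs.card = d / j := by
      rw [hFs, card_residue d j (d % j) hj hsj]
      simp
    have hLval : L (fun _ => 1) = 1 := by
      simp only [hL, LinearMap.add_apply]
      show (∑ _t ∈ F0, (1 : ZMod 2)) + (∑ _t ∈ Fs, (1 : ZMod 2)) = 1
      rw [Finset.sum_const, Finset.sum_const, hc0, hcs]
      simp only [nsmul_eq_mul, mul_one]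
      push_cast
      ring_nf
      rw [show ((2 : ZMod 2) = 0) by decide]
      ring
    rw [hL1] at hLval
    exact absurd hLval.symm one_ne_zero
  · intro hdvd
    obtain ⟨q, hq⟩ := hdvd
    have hq1 : 1 ≤ q := by
      rcases Nat.eq_zero_or_pos q with h0 | h0
      · subst h0; omega
      · exact h0
    have hsum : (fun _ => 1 : Fin d → ZMod 2) = ∑ k ∈ Finset.range q, window d j (k * j) := by
      funext t
      rw [Finset.sum_apply]
      unfold window
      rw [Finset.sum_boole]
      have hdm : (t : ℕ) / j * j + (t : ℕ) % j = (t : ℕ) := Nat.div_add_mod' _ _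
      have hmod : (t : ℕ) % j < j := Nat.mod_lt _ hj
      have htd : (t : ℕ) < d := t.isLt
      have hsingle : ((Finset.range q).filter
          (fun k => k * j ≤ (t : ℕ) ∧ (t : ℕ) ≤ k * j + j - 1)) = {(t : ℕ) / j} := by
        apply Finset.eq_singleton_iff_unique_mem.mpr
        constructor
        · simp only [Finset.mem_filter, Finset.mem_range]
          have hqj : q * j = j * q := Nat.mul_comm q j
          refine ⟨?_, by omega, by omega⟩
          rw [Nat.div_lt_iff_lt_mul hj]
          omega
        · intro k hk
          simp only [Finset.mem_filter, Finset.mem_range] at hk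
          obtain ⟨hkq, hk1, hk2⟩ := hk
          have hlt : (t : ℕ) < (k + 1) * j := by
            rw [Nat.add_mul, Nat.one_mul]
            omega
          exact ((Nat.div_eq_of_lt_le hk1 hlt)).symm
      rw [hsingle]
      simp
    rw [hsum]
    apply Submodule.sum_mem
    intro k hk
    apply Submodule.subset_span
    refine ⟨k * j, ?_, rfl⟩
    simp only [Finset.mem_range] at hk
    have h5 : (k + 1) * j ≤ q * j := Nat.mul_le_mul_right _ hk
    rw [Nat.add_mul, Nat.one_mul] at h5
    have hqj : q * j = j * q := Nat.mul_comm q j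
    omega
end

section
/- Let d and j be integers with 1 ≤ j ≤ d and j ∣ d. For each i with 0 ≤ i ≤ d − j, let v_i ∈ (ZMod 2)^d be the indicator vector of the window {i, i+1, …, i+j−1}, and let 𝟙 ∈ (ZMod 2)^d be the all-ones vector. Then 𝟙 = v_0 + v_j + v_{2j} + ⋯ + v_{d−j} (the sum over the d/j windows starting at multiples of j), and this is the unique way to write 𝟙 as an F₂-linear combination of v_0, …, v_{d−j}. -/
/-- Linear independence of the windows. -/
lemma windows_li (d j : ℕ) (hj : 1 ≤ j) (hjd : j ≤ d)
    (a : Fin (d - j + 1) → ZMod 2)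
    (h : (∑ i : Fin (d - j + 1), a i • window d j (i : ℕ)) = 0) :
    ∀ i, a i = 0 := by
  suffices H : ∀ n (hn : n < d - j + 1), a ⟨n, hn⟩ = 0 by
    intro i; have := H i i.2; simpa using this
  intro n
  induction n using Nat.strong_induction_on with
  | _ n IH =>
    intro hn
    have hnd : n < d := by omega
    have h1 := congrFun h ⟨n, hnd⟩
    simp only [Finset.sum_apply, Pi.smul_apply, Pi.zero_apply, smul_eq_mul, window] at h1
    have hsum : (∑ i : Fin (d - j + 1),
        a i * (if (i : ℕ) ≤ n ∧ n ≤ (i : ℕ) + j - 1 then 1 else 0)) =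
        a ⟨n, hn⟩ * (if n ≤ n ∧ n ≤ n + j - 1 then 1 else 0) := by
      apply Finset.sum_eq_single_of_mem _ (Finset.mem_univ _)
      intro b _ hb
      have hbn : (b : ℕ) ≠ n := by
        intro hbe; apply hb; exact Fin.ext hbe
      rcases lt_or_gt_of_ne hbn with hlt | hgt
      · have : a b = 0 := by
          have := IH (b : ℕ) hlt b.2
          simpa using this
        simp [this]
      · have : ¬((b : ℕ) ≤ n ∧ n ≤ (b : ℕ) + j - 1) := by omega
        simp [this]
    rw [hsum] at h1
    have : (n ≤ n ∧ n ≤ n + j - 1) := by omega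
    simpa [this] using h1

lemma tiling (d j : ℕ) (hj : 1 ≤ j) (hjd : j ≤ d) (hdvd : j ∣ d) :
    ((fun _ => 1 : Fin d → ZMod 2) = ∑ r ∈ Finset.range (d / j), window d j (r * j)) := by
  funext t
  rw [Finset.sum_apply]
  symm
  have htd : (t : ℕ) < d := t.2
  have hmem : (t : ℕ) / j ∈ Finset.range (d / j) :=
    Finset.mem_range.mpr (Nat.div_lt_div_of_lt_of_dvd hdvd htd)
  rw [Finset.sum_eq_single_of_mem ((t : ℕ) / j) hmem]
  · have h1 : (t : ℕ) / j * j ≤ (t : ℕ) := Nat.div_mul_le_self _ _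
    have h2 : (t : ℕ) < (t : ℕ) / j * j + j := by
      have h3 := Nat.div_add_mod (t : ℕ) j
      have h4 := Nat.mod_lt (t : ℕ) (show 0 < j by omega)
      have h5 : (t : ℕ) / j * j = j * ((t : ℕ) / j) := Nat.mul_comm _ _
      omega
    have : ((t : ℕ) / j * j ≤ (t : ℕ) ∧ (t : ℕ) ≤ (t : ℕ) / j * j + j - 1) := by omega
    simp [window, this]
  · intro r _ hr
    have : ¬(r * j ≤ (t : ℕ) ∧ (t : ℕ) ≤ r * j + j - 1) := by
      rintro ⟨hle, hle2⟩
      apply hr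
      symm
      apply Nat.div_eq_of_lt_le hle
      have : (r + 1) * j = r * j + j := by ring
      omega
    simp [window, this]

/-- When `j ∣ d`, the all-ones vector is the sum of the `d/j` disjoint windows
starting at multiples of `j`, and this is the unique `F₂`-linear combination of
`v_0, …, v_{d-j}` equal to the all-ones vector: the coefficient of `v_i` is `1`
exactly when `j ∣ i`. -/
theorem allOnes_eq_sum_tiling_windows_unique (d j : ℕ) (hj : 1 ≤ j) (hjd : j ≤ d)
    (hdvd : j ∣ d) :
    ((fun _ => 1 : Fin d → ZMod 2) = ∑ r ∈ Finset.range (d / j), window d j (r * j)) ∧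
    (∀ c : Fin (d - j + 1) → ZMod 2,
      (∑ i : Fin (d - j + 1), c i • window d j (i : ℕ)) = (fun _ => 1 : Fin d → ZMod 2) →
      ∀ i : Fin (d - j + 1), c i = if j ∣ (i : ℕ) then 1 else 0) := by
  have htile := tiling d j hj hjd hdvd
  refine ⟨htile, ?_⟩
  intro c hc i
  -- the canonical coefficients
  set c' : Fin (d - j + 1) → ZMod 2 := fun i => if j ∣ (i : ℕ) then 1 else 0 with hc'
  -- the canonical combination also sums to the all-ones vector
  have hsum' : (∑ i : Fin (d - j + 1), c' i • window d j (i : ℕ))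
      = (fun _ => 1 : Fin d → ZMod 2) := by
    rw [htile]
    rw [Fin.sum_univ_eq_sum_range
      (fun n => (if j ∣ n then (1 : ZMod 2) else 0) • window d j n) (d - j + 1)]
    simp only [ite_smul, one_smul, zero_smul]
    rw [← Finset.sum_filter]
    symm
    apply Finset.sum_nbij' (i := fun r => r * j) (j := fun n => n / j)
    · intro r hr
      simp only [Finset.mem_range] at hr
      simp only [Finset.mem_filter, Finset.mem_range]
      have h1 : (r + 1) * j ≤ d / j * j := by
        apply Nat.mul_le_mul_right
        omega
      rw [Nat.div_mul_cancel hdvd] at h1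
      have h2 : (r + 1) * j = r * j + j := by ring
      exact ⟨by omega, ⟨r, by ring⟩⟩
    · intro n hn
      simp only [Finset.mem_filter, Finset.mem_range] at hn
      obtain ⟨hn1, k, hk⟩ := hn
      simp only [Finset.mem_range]
      apply Nat.div_lt_div_of_lt_of_dvd hdvd
      omega
    · intro r hr
      exact Nat.mul_div_cancel r (by omega)
    · intro n hn
      simp only [Finset.mem_filter] at hn
      exact Nat.div_mul_cancel hn.2
    · intro r hr
      rfl
  have hzero : (∑ i : Fin (d - j + 1), (c i - c' i) • window d j (i : ℕ)) = 0 := by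
    simp only [sub_smul, Finset.sum_sub_distrib, hc, hsum', sub_self]
  have := windows_li d j hj hjd _ hzero i
  have : c i = c' i := by linear_combination this
  simpa [hc'] using this
end

section
/- Let d and j be integers with 1 ≤ j ≤ d. For each i with 0 ≤ i ≤ d − j, let v_i ∈ (ZMod 2)^d be the indicator vector of the window {i, i+1, …, i+j−1}, and let 𝟙 ∈ (ZMod 2)^d be the all-ones vector. Under the F₂-linear identification of (ZMod 2)^d with polynomials over ZMod 2 of degree < d (sending the t-th standard basis vector to X^t), the vector 𝟙 lies in the span of {v_0, …, v_{d−j}} if and only if σ_j = 1 + X + ⋯ + X^{j−1} divides σ_d = 1 + X + ⋯ + X^{d−1} in (ZMod 2)[X]. -/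
open Polynomial

lemma sigma_coeff {R : Type*} [CommRing R] (n m : ℕ) :
    (∑ k ∈ Finset.range n, (X : R[X]) ^ k).coeff m = if m < n then 1 else 0 := by
  rw [Polynomial.finset_sum_coeff]
  simp only [Polynomial.coeff_X_pow]
  simp only [eq_comm (a := m)]
  rw [Finset.sum_ite_eq' (Finset.range n) m (fun _ => (1 : R))]
  simp [Finset.mem_range]

lemma sigma_natDegree {R : Type*} [CommRing R] [Nontrivial R] (n : ℕ) (hn : 1 ≤ n) :
    (∑ k ∈ Finset.range n, (X : R[X]) ^ k).natDegree = n - 1 := by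
  apply le_antisymm
  · apply Polynomial.natDegree_sum_le_of_forall_le
    intro i hi
    simp only [Polynomial.natDegree_X_pow]
    exact Nat.le_sub_one_of_lt (Finset.mem_range.1 hi)
  · apply Polynomial.le_natDegree_of_ne_zero
    rw [sigma_coeff, if_pos (by omega)]
    exact one_ne_zero


section main

variable (d j : ℕ) (Φ : (Fin d → ZMod 2) →ₗ[ZMod 2] Polynomial (ZMod 2))
  (hΦ : ∀ t : Fin d, Φ (Pi.single t 1) = X ^ (t : ℕ))

include hΦ in
lemma Phi_apply (v : Fin d → ZMod 2) : Φ v = ∑ t : Fin d, v t • (X : Polynomial (ZMod 2)) ^ (t : ℕ) := by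
  conv_lhs => rw [← Finset.univ_sum_single v]
  rw [map_sum]
  refine Finset.sum_congr rfl fun t _ => ?_
  rw [← hΦ t, ← map_smul]
  congr 1
  ext s
  by_cases h : s = t <;> simp [h, Pi.single_apply]

include hΦ in
lemma Phi_ones : Φ (fun _ => 1 : Fin d → ZMod 2) = ∑ k ∈ Finset.range d, (X : Polynomial (ZMod 2)) ^ k := by
  rw [Phi_apply d Φ hΦ]
  simp only [one_smul]
  exact Fin.sum_univ_eq_sum_range (fun k => (X : Polynomial (ZMod 2)) ^ k) d

include hΦ in
lemma Phi_window (hj : 1 ≤ j) (hjd : j ≤ d) (i : ℕ) (hi : i ≤ d - j) :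
    Φ (window d j i) = X ^ i * ∑ k ∈ Finset.range j, (X : Polynomial (ZMod 2)) ^ k := by
  rw [Phi_apply d Φ hΦ]
  simp only [window]
  rw [Fin.sum_univ_eq_sum_range
    (fun t => (if i ≤ t ∧ t ≤ i + j - 1 then (1 : ZMod 2) else 0) • (X : Polynomial (ZMod 2)) ^ t) d]
  rw [Finset.mul_sum]
  simp only [← pow_add]
  rw [← Finset.sum_image (f := fun t => (X : Polynomial (ZMod 2)) ^ t)
    (g := fun k => i + k) (by intro a ha b hb h; simpa using h)]
  rw [← Finset.sum_filter_of_ne (p := fun t => i ≤ t ∧ t ≤ i + j - 1)]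
  · have himg : Finset.image (fun k => i + k) (Finset.range j) =
        (Finset.range d).filter (fun t => i ≤ t ∧ t ≤ i + j - 1) := by
      ext a
      simp only [Finset.mem_image, Finset.mem_range, Finset.mem_filter]
      constructor
      · rintro ⟨k, hk, rfl⟩; omega
      · intro h; exact ⟨a - i, by omega, by omega⟩
    rw [himg]
    refine Finset.sum_congr rfl fun t ht => ?_
    simp only [Finset.mem_filter] at ht
    rw [if_pos ht.2, one_smul]
  · intro t _ h
    by_contra hc
    rw [if_neg hc, zero_smul] at h
    exact h rfl

end main

/-- Under any `F₂`-linear identification `Φ` of `(ZMod 2)^d` with polynomials of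
degree `< d` sending the `t`-th standard basis vector to `X^t`, the all-ones
vector lies in the span of the window vectors `v_0, …, v_{d-j}` if and only if
`σ_j = 1 + X + ⋯ + X^{j-1}` divides `σ_d = 1 + X + ⋯ + X^{d-1}` in `(ZMod 2)[X]`. -/
theorem allOnes_mem_span_windows_iff_geomSum_dvd (d j : ℕ) (hj : 1 ≤ j) (hjd : j ≤ d)
    (Φ : (Fin d → ZMod 2) →ₗ[ZMod 2] Polynomial (ZMod 2))
    (hΦ : ∀ t : Fin d, Φ (Pi.single t 1) = X ^ (t : ℕ)) :
    (Φ (fun _ => 1 : Fin d → ZMod 2) ∈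
      Submodule.span (ZMod 2) (Φ '' {x : Fin d → ZMod 2 | ∃ i ≤ d - j, x = window d j i})) ↔
    (∑ k ∈ Finset.range j, (X : Polynomial (ZMod 2)) ^ k) ∣
      (∑ k ∈ Finset.range d, (X : Polynomial (ZMod 2)) ^ k) := by
  set σj : Polynomial (ZMod 2) := ∑ k ∈ Finset.range j, X ^ k with hσj
  set σd : Polynomial (ZMod 2) := ∑ k ∈ Finset.range d, X ^ k with hσd
  rw [Phi_ones d Φ hΦ]
  constructor
  · intro h
    have hle : Submodule.span (ZMod 2)
        (Φ '' {x : Fin d → ZMod 2 | ∃ i ≤ d - j, x = window d j i}) ≤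
        Submodule.restrictScalars (ZMod 2) (Ideal.span {σj}) := by
      rw [Submodule.span_le]
      rintro _ ⟨x, ⟨i, hi, rfl⟩, rfl⟩
      rw [Phi_window d j Φ hΦ hj hjd i hi]
      exact Ideal.mem_span_singleton.2 ⟨X ^ i, mul_comm _ _⟩
    exact Ideal.mem_span_singleton.1 (hle h)
  · rintro ⟨q, hq⟩
    have hσjm : σj.Monic := monic_geom_sum_X (by omega)
    have hσdm : σd.Monic := monic_geom_sum_X (by omega)
    have hq0 : q ≠ 0 := by
      rintro rfl
      exact hσdm.ne_zero (by simpa using hq)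
    have hdeg : q.natDegree = d - j := by
      have := Polynomial.natDegree_mul hσjm.ne_zero hq0
      rw [← hq, sigma_natDegree d (by omega), sigma_natDegree j hj] at this
      omega
    rw [← hσd, hq, Polynomial.as_sum_range' q (d - j + 1) (by omega), Finset.mul_sum]
    apply Submodule.sum_mem
    intro i hi
    have : σj * ((Polynomial.monomial i) (q.coeff i)) = q.coeff i • (X ^ i * σj) := by
      rw [Polynomial.smul_eq_C_mul, Polynomial.C_mul_X_pow_eq_monomial.symm]
      ring
    rw [this]
    apply Submodule.smul_mem
    apply Submodule.subset_span
    refine ⟨window d j i, ⟨i, by simp at hi; omega, rfl⟩, ?_⟩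
    rw [Phi_window d j Φ hΦ hj hjd i (by simp at hi; omega)]
end
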